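/- In the Algorithm 1 setting, let F: [0,1]^n → [0,∞) be a nonnegative continuously differentiable DR-submodular function, and let q* ∈ Q, p* ∈ P satisfy q* + p* ≤ 1. Then for every integer 1 ≤ i ≤ 1/ε: ⟨p*⊙(1 − z⁽ⁱ⁻¹⁾), ∇F(z⁽ⁱ⁻¹⁾)⟩ ≥ (1−ε)^{i−1}·F(p*) − F(z⁽ⁱ⁻¹⁾) and q* + p*⊙(1 − y⁽ⁱ⁻¹⁾) ≤ 1 (i.e., the assignment a = q*, b = p* is a feasible solution of the linear program solved in iteration i of Algorithm 1). -/

import Mathlib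

open scoped InnerProductSpace
open Pointwise

noncomputable section

/-- Vectors in `ℝ^n`, with the Euclidean (ℓ₂) norm and inner product. -/
abbrev Vec (n : ℕ) := EuclideanSpace ℝ (Fin n)

/-- Membership in the box `[0,1]^n`. -/
def inBox {n : ℕ} (x : Vec n) : Prop := ∀ j, 0 ≤ x j ∧ x j ≤ 1

/-- Coordinate-wise (Hadamard) product `x ⊙ y`. -/
def had {n : ℕ} (x y : Vec n) : Vec n := WithLp.toLp 2 (fun j => x j * y j)

/-- Coordinate-wise probabilistic sum `x ⊛ y`. -/
def psum {n : ℕ} (x y : Vec n) : Vec n := WithLp.toLp 2 (fun j => x j + y j - x j * y j)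

/-- The vector `1 - x` (coordinate-wise). -/
def oneM {n : ℕ} (x : Vec n) : Vec n := WithLp.toLp 2 (fun j => 1 - x j)

/-- ℓ∞-norm. -/
def normInf {n : ℕ} (x : Vec n) : ℝ := ⨆ j, |x j|

/-- DR-submodularity of `F : [0,1]^n → ℝ`. -/
def DRSubmodular {n : ℕ} (F : Vec n → ℝ) : Prop :=
  ∀ a b : Vec n, inBox a → inBox b → (∀ j, a j ≤ b j) →
    ∀ k : ℝ, 0 < k → ∀ i : Fin n, inBox (b + EuclideanSpace.single i k) →
      F (b + EuclideanSpace.single i k) - F b ≤ F (a + EuclideanSpace.single i k) - F a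

/-- `P` is down-closed (with respect to the domain `[0,1]^n`). -/
def downClosed {n : ℕ} (P : Set (Vec n)) : Prop :=
  ∀ x y : Vec n, (∀ j, 0 ≤ x j) → (∀ j, x j ≤ y j) → y ∈ P → x ∈ P

/-- The Algorithm 1 setting: `Q ⊆ [0,1]^n` convex, `P ⊆ [0,1]^n` down-closed convex,
`ε ∈ (0,1)` with `1/ε = N ∈ ℕ`, and sequences `y⁽ⁱ⁾, z⁽ⁱ⁾` built from `a⁽ⁱ⁾ ∈ Q`,
`b⁽ⁱ⁾ ∈ P` satisfying `a⁽ⁱ⁾ + b⁽ⁱ⁾ ⊙ (1 − y⁽ⁱ⁻¹⁾) ≤ 1`, via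
`y⁽ⁱ⁾ = (1−ε)·y⁽ⁱ⁻¹⁾ + ε·a⁽ⁱ⁾` and `z⁽ⁱ⁾ = z⁽ⁱ⁻¹⁾ + ε·(1 − z⁽ⁱ⁻¹⁾) ⊙ b⁽ⁱ⁾`. -/
structure Alg1Setting {n : ℕ} (Q P : Set (Vec n)) (ε : ℝ) (N : ℕ)
    (y z a b : ℕ → Vec n) : Prop where
  hQbox : ∀ x ∈ Q, inBox x
  hQconv : Convex ℝ Q
  hPbox : ∀ x ∈ P, inBox x
  hPconv : Convex ℝ P
  hPdown : downClosed P
  hε0 : 0 < ε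
  hε1 : ε < 1
  hεN : (N : ℝ) * ε = 1
  hy0Q : y 0 ∈ Q
  hy0min : ∀ x ∈ Q, normInf (y 0) ≤ normInf x
  hz0 : z 0 = 0
  haQ : ∀ i, 1 ≤ i → i ≤ N → a i ∈ Q
  hbP : ∀ i, 1 ≤ i → i ≤ N → b i ∈ P
  hfeas : ∀ i, 1 ≤ i → i ≤ N → ∀ j, a i j + b i j * (1 - y (i-1) j) ≤ 1
  hyrec : ∀ i, 1 ≤ i → i ≤ N → y i = (1-ε) • y (i-1) + ε • a i
  hzrec : ∀ i, 1 ≤ i → i ≤ N → z i = z (i-1) + ε • had (oneM (z (i-1))) (b i)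

section Aux
variable {n : ℕ} {F : Vec n → ℝ} {G : Vec n → Vec n}

lemma vec_add_apply (x y : Vec n) (j : Fin n) : (x + y) j = x j + y j := rfl
lemma vec_smul_apply (t : ℝ) (x : Vec n) (j : Fin n) : (t • x) j = t * x j := rfl
lemma vec_sub_apply (x y : Vec n) (j : Fin n) : (x - y) j = x j - y j := rfl

lemma inner_apply' (x y : Vec n) : ⟪x, y⟫_ℝ = ∑ j, x j * y j := by
  simp [PiLp.inner_apply, RCLike.inner_apply, conj_trivial, mul_comm]

lemma smul_single' (i : Fin n) (t : ℝ) :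
    t • (EuclideanSpace.single i (1:ℝ)) = EuclideanSpace.single i t := by
  ext j
  by_cases hj : j = i <;> simp [EuclideanSpace.single_apply, hj, vec_smul_apply]

lemma line_hasDerivAt (hGrad : ∀ x, inBox x → HasGradientAt F (G x) x)
    (c d : Vec n) (s : ℝ) (h : inBox (c + s • d)) :
    HasDerivAt (fun t : ℝ => F (c + t • d)) ⟪d, G (c + s • d)⟫_ℝ s := by
  have h1 : HasDerivAt (fun t : ℝ => c + t • d) d s := by
    simpa using ((hasDerivAt_id s).smul_const d).const_add c
  have h2 := ((hGrad _ h).hasFDerivAt).comp_hasDerivAt s h1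
  have h3 : HasDerivAt (F ∘ fun t : ℝ => c + t • d) ⟪d, G (c + s • d)⟫_ℝ s := by
    rw [real_inner_comm]
    simpa [InnerProductSpace.toDual_apply_apply] using h2
  exact h3


lemma grad_mono (hDR : DRSubmodular F)
    (hGrad : ∀ x, inBox x → HasGradientAt F (G x) x)
    (u v : Vec n) (hu : inBox u) (hv : inBox v) (huv : ∀ j, u j ≤ v j)
    (i : Fin n) (hi : u i < v i) : G v i ≤ G u i := by
  set e : Vec n := EuclideanSpace.single i 1 with he
  have hsm : ∀ t : ℝ, t • e = EuclideanSpace.single i t := fun t => smul_single' i t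
  have hbu : inBox (u + (0:ℝ) • e) := by simpa using hu
  have hbv : inBox (v + (0:ℝ) • e) := by simpa using hv
  have gU : HasDerivAt (fun t : ℝ => F (u + t • e)) (G u i) 0 := by
    have := line_hasDerivAt hGrad u e 0 hbu
    simpa [he, EuclideanSpace.inner_single_left] using this
  have gV : HasDerivAt (fun t : ℝ => F (v + t • e)) (G v i) 0 := by
    have := line_hasDerivAt hGrad v e 0 hbv
    simpa [he, EuclideanSpace.inner_single_left] using this
  have h0 : ∀ x : Vec n, x + EuclideanSpace.single i (0:ℝ) = x := by
    intro x; ext j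
    by_cases hj : j = i <;> simp [EuclideanSpace.single_apply, hj, vec_add_apply]
  have tU := hasDerivAt_iff_tendsto_slope.1 gU
  have tV := hasDerivAt_iff_tendsto_slope.1 gV
  have hIoi : (Set.Ioi (0:ℝ)) ⊆ {(0:ℝ)}ᶜ := fun x hx => ne_of_gt hx
  have hIio : (Set.Iio (0:ℝ)) ⊆ {(0:ℝ)}ᶜ := fun x hx => ne_of_lt hx
  by_cases hvi : v i < 1
  · -- forward difference quotients
    have key : ∀ᶠ t in nhdsWithin 0 (Set.Ioi 0),
        slope (fun t : ℝ => F (v + t • e)) 0 t ≤ slope (fun t : ℝ => F (u + t • e)) 0 t := by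
      filter_upwards [Ioo_mem_nhdsGT_of_mem
        (show (0:ℝ) ∈ Set.Ico (0:ℝ) (1 - v i) from ⟨le_refl _, by linarith⟩)] with t ht
      obtain ⟨ht0, ht1⟩ := ht
      have hboxv : inBox (v + EuclideanSpace.single i t) := by
        intro j
        by_cases hj : j = i
        · subst hj
          have h1 := (hv j).1
          simp only [vec_add_apply, EuclideanSpace.single_apply, if_pos rfl]
          constructor <;> simp <;> linarith
        · simp only [vec_add_apply, EuclideanSpace.single_apply, if_neg hj, add_zero]
          exact hv j
      have hdr := hDR u v hu hv huv t ht0 i hboxv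
      simp only [slope_def_field, sub_zero, hsm, h0]
      exact (div_le_div_iff_of_pos_right ht0).2 hdr
    exact le_of_tendsto_of_tendsto (tV.mono_left (nhdsWithin_mono 0 hIoi))
      (tU.mono_left (nhdsWithin_mono 0 hIoi)) key
  · -- v i = 1 : backward at v, forward at u
    push_neg at hvi
    have hvi1 : v i = 1 := le_antisymm (hv i).2 hvi
    have hvi0 : 0 < v i := by rw [hvi1]; norm_num
    set δ : ℝ := min (v i - u i) (v i) with hδdef
    have hδ : 0 < δ := lt_min (by linarith) hvi0
    have hneg : Filter.Tendsto (fun t : ℝ => -t) (nhdsWithin 0 (Set.Iio 0))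
        (nhdsWithin 0 (Set.Ioi 0)) := by
      apply tendsto_nhdsWithin_of_tendsto_nhds_of_eventually_within
      · simpa using (continuous_neg.tendsto (0:ℝ)).mono_left
          (nhdsWithin_le_nhds (s := Set.Iio (0:ℝ)))
      · filter_upwards [self_mem_nhdsWithin] with t ht
        exact Set.mem_Ioi.2 (neg_pos.2 ht)
    have tU' : Filter.Tendsto (fun t : ℝ => slope (fun s : ℝ => F (u + s • e)) 0 (-t))
        (nhdsWithin 0 (Set.Iio 0)) (nhds (G u i)) :=
      (tU.mono_left (nhdsWithin_mono 0 hIoi)).comp hneg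
    have key : ∀ᶠ t in nhdsWithin 0 (Set.Iio 0),
        slope (fun s : ℝ => F (v + s • e)) 0 t ≤ slope (fun s : ℝ => F (u + s • e)) 0 (-t) := by
      filter_upwards [Ioo_mem_nhdsLT_of_mem
        (show (0:ℝ) ∈ Set.Ioc (-δ) (0:ℝ) from ⟨by linarith, le_refl _⟩)] with t ht
      obtain ⟨ht0, ht1⟩ := ht
      have htv : -(v i) < t := by
        have : -δ ≤ -(min (v i - u i) (v i)) := le_refl _
        have h1 : δ ≤ v i := min_le_right _ _
        linarith
      have htu : -(v i - u i) < t := by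
        have h1 : δ ≤ v i - u i := min_le_left _ _
        linarith
      have hboxb : inBox (v + EuclideanSpace.single i t) := by
        intro j
        by_cases hj : j = i
        · subst hj
          have h2 := (hv j).2
          simp only [vec_add_apply, EuclideanSpace.single_apply, if_pos rfl]
          constructor <;> simp <;> linarith
        · simp only [vec_add_apply, EuclideanSpace.single_apply, if_neg hj, add_zero]
          exact hv j
      have hle : ∀ j, u j ≤ (v + EuclideanSpace.single i t) j := by
        intro j
        by_cases hj : j = i
        · subst hj
          simp only [vec_add_apply, EuclideanSpace.single_apply, if_pos rfl]
          simp only [if_true]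
          linarith
        · simp only [vec_add_apply, EuclideanSpace.single_apply, if_neg hj, add_zero]
          exact huv j
      have hvrw : v + EuclideanSpace.single i t + EuclideanSpace.single i (-t) = v := by
        ext j
        by_cases hj : j = i <;>
          simp [EuclideanSpace.single_apply, hj, vec_add_apply]
      have hboxtop : inBox (v + EuclideanSpace.single i t + EuclideanSpace.single i (-t)) := by
        rw [hvrw]; exact hv
      have hdr := hDR u (v + EuclideanSpace.single i t) hu hboxb hle (-t) (by linarith) i hboxtop
      rw [hvrw] at hdr
      simp only [slope_def_field, sub_zero, hsm, h0]
      have hrw : (F (v + EuclideanSpace.single i t) - F v) / t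
          = (F v - F (v + EuclideanSpace.single i t)) / (-t) := by
        rw [div_neg, ← neg_div, neg_sub]
      rw [hrw]
      exact (div_le_div_iff_of_pos_right (by linarith)).2 hdr
    exact le_of_tendsto_of_tendsto (tV.mono_left (nhdsWithin_mono 0 hIio)) tU' key


lemma inner_grad_anti (hDR : DRSubmodular F)
    (hGrad : ∀ x, inBox x → HasGradientAt F (G x) x)
    (c d : Vec n) (hd : ∀ j, 0 ≤ d j) {s t : ℝ} (hst : s ≤ t)
    (hs : inBox (c + s • d)) (ht : inBox (c + t • d)) :
    ⟪d, G (c + t • d)⟫_ℝ ≤ ⟪d, G (c + s • d)⟫_ℝ := by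
  rcases eq_or_lt_of_le hst with h | h
  · subst h; exact le_refl _
  rw [inner_apply', inner_apply']
  apply Finset.sum_le_sum
  intro j _
  rcases eq_or_lt_of_le (hd j) with hdj | hdj
  · rw [← hdj]; simp
  · have huv : ∀ k, (c + s • d) k ≤ (c + t • d) k := by
      intro k
      simp only [vec_add_apply, vec_smul_apply]
      nlinarith [hd k]
    have hlt : (c + s • d) j < (c + t • d) j := by
      simp only [vec_add_apply, vec_smul_apply]
      nlinarith
    have := grad_mono hDR hGrad (c + s • d) (c + t • d) hs ht huv j hlt
    nlinarith

lemma grad_ub (hDR : DRSubmodular F)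
    (hGrad : ∀ x, inBox x → HasGradientAt F (G x) x)
    (z w : Vec n) (hz : inBox z) (hw : inBox w) (hzw : ∀ j, z j ≤ w j) :
    F w - F z ≤ ⟪w - z, G z⟫_ℝ := by
  set d : Vec n := w - z with hd
  have hd0 : ∀ j, 0 ≤ d j := by
    intro j; rw [hd, vec_sub_apply]; linarith [hzw j]
  have hbox : ∀ s : ℝ, 0 ≤ s → s ≤ 1 → inBox (z + s • d) := by
    intro s h0 h1 j
    simp only [vec_add_apply, vec_smul_apply, hd, vec_sub_apply]
    constructor
    · nlinarith [(hz j).1, hzw j]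
    · nlinarith [(hw j).2, hzw j]
  have hderiv : ∀ s ∈ Set.Icc (0:ℝ) 1,
      HasDerivAt (fun t : ℝ => F (z + t • d)) ⟪d, G (z + s • d)⟫_ℝ s :=
    fun s hs => line_hasDerivAt hGrad z d s (hbox s hs.1 hs.2)
  obtain ⟨c, hc, hceq⟩ := exists_hasDerivAt_eq_slope (fun t : ℝ => F (z + t • d))
    (fun s => ⟪d, G (z + s • d)⟫_ℝ) (by norm_num)
    (fun s hs => (hderiv s hs).continuousAt.continuousWithinAt)
    (fun s hs => hderiv s ⟨hs.1.le, hs.2.le⟩)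
  have hw' : z + (1:ℝ) • d = w := by rw [hd, one_smul, add_sub_cancel]
  have hz' : z + (0:ℝ) • d = z := by rw [zero_smul, add_zero]
  have hanti := inner_grad_anti hDR hGrad z d hd0 (le_of_lt hc.1)
    (by rw [hz']; exact hz) (hbox c hc.1.le hc.2.le)
  rw [hw', hz'] at hceq
  rw [hz'] at hanti
  calc F w - F z = (F w - F z) / (1 - 0) := by norm_num
  _ = ⟪d, G (z + c • d)⟫_ℝ := hceq.symm
  _ ≤ ⟪d, G z⟫_ℝ := hanti

lemma scale_lb (hDR : DRSubmodular F)
    (hGrad : ∀ x, inBox x → HasGradientAt F (G x) x)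
    (hF0 : ∀ x, inBox x → 0 ≤ F x)
    (p zv : Vec n) (hp : inBox p) (hz : inBox zv) (m : ℝ) (hm0 : 0 ≤ m) (hm1 : m < 1)
    (hzm : ∀ j, zv j ≤ m) :
    (1 - m) * F p ≤ F (p + had zv (oneM p)) := by
  rcases eq_or_lt_of_le hm0 with h0 | h0
  · have hz0 : had zv (oneM p) = 0 := by
      ext j
      have := (hz j).1
      have := hzm j
      have : zv j = 0 := le_antisymm (by linarith) (hz j).1
      simp [had, this]
    rw [hz0, add_zero, ← h0]
    linarith
  set d : Vec n := had zv (oneM p) with hd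
  set T : ℝ := m⁻¹ with hT
  have hTm : T * m = 1 := inv_mul_cancel₀ (ne_of_gt h0)
  have hT1 : 1 < T := by
    rw [hT]
    exact (one_lt_inv₀ h0).2 hm1
  have hd0 : ∀ j, 0 ≤ d j := by
    intro j
    simp only [hd, had, oneM, PiLp.toLp_apply]
    exact mul_nonneg (hz j).1 (by linarith [(hp j).2])
  have hdub : ∀ j, d j * T ≤ 1 - p j := by
    intro j
    simp only [hd, had, oneM, PiLp.toLp_apply]
    have h1 := hzm j
    have h2 := (hp j).2
    have h3 : zv j * T ≤ m * T := by nlinarith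
    nlinarith [hd0 j, (hz j).1]
  have hbox : ∀ s : ℝ, 0 ≤ s → s ≤ T → inBox (p + s • d) := by
    intro s hs0 hsT j
    simp only [vec_add_apply, vec_smul_apply]
    constructor
    · nlinarith [(hp j).1, hd0 j]
    · nlinarith [hdub j, hd0 j]
  have hderiv : ∀ s ∈ Set.Icc (0:ℝ) T,
      HasDerivAt (fun t : ℝ => F (p + t • d)) ⟪d, G (p + s • d)⟫_ℝ s :=
    fun s hs => line_hasDerivAt hGrad p d s (hbox s hs.1 hs.2)
  obtain ⟨c₁, hc₁, hceq₁⟩ := exists_hasDerivAt_eq_slope (fun t : ℝ => F (p + t • d))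
    (fun s => ⟪d, G (p + s • d)⟫_ℝ) (by norm_num : (0:ℝ) < 1)
    (fun s hs => (hderiv s ⟨hs.1, le_trans hs.2 hT1.le⟩).continuousAt.continuousWithinAt)
    (fun s hs => hderiv s ⟨hs.1.le, le_trans hs.2.le hT1.le⟩)
  obtain ⟨c₂, hc₂, hceq₂⟩ := exists_hasDerivAt_eq_slope (fun t : ℝ => F (p + t • d))
    (fun s => ⟪d, G (p + s • d)⟫_ℝ) hT1
    (fun s hs => (hderiv s ⟨le_trans zero_le_one hs.1, hs.2⟩).continuousAt.continuousWithinAt)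
    (fun s hs => hderiv s ⟨le_trans zero_le_one hs.1.le, hs.2.le⟩)
  have hanti := inner_grad_anti hDR hGrad p d hd0 (le_of_lt (lt_trans hc₁.2 hc₂.1))
    (hbox c₁ hc₁.1.le (le_trans hc₁.2.le hT1.le)) (hbox c₂ (by linarith [hc₂.1]) hc₂.2.le)
  have hgT : 0 ≤ F (p + T • d) := hF0 _ (hbox T (by linarith) (le_refl _))
  set g0 : ℝ := F (p + (0:ℝ) • d) with hg0
  set g1 : ℝ := F (p + (1:ℝ) • d) with hg1
  set gT : ℝ := F (p + T • d) with hgTd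
  have e1 : ⟪d, G (p + c₁ • d)⟫_ℝ = g1 - g0 := by
    rw [hceq₁]; norm_num
  have e2 : ⟪d, G (p + c₂ • d)⟫_ℝ = (gT - g1) / (T - 1) := hceq₂
  have hkey : (gT - g1) / (T - 1) ≤ g1 - g0 := by
    rw [← e1, ← e2]; exact hanti
  have hTpos : 0 < T - 1 := by linarith
  have hkey2 : gT - g1 ≤ (T - 1) * (g1 - g0) := by
    rw [div_le_iff₀ hTpos] at hkey
    linarith [hkey]
  have h5 : 0 ≤ T * g1 - (T - 1) * g0 := by linarith
  have h6 : 0 ≤ m * (T * g1 - (T - 1) * g0) := mul_nonneg h0.le h5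
  have h7 : m * (T * g1 - (T - 1) * g0) = g1 - (1 - m) * g0 := by
    linear_combination (g1 - g0) * hTm
  have hfin : (1 - m) * g0 ≤ g1 := by linarith
  have hp0 : g0 = F p := by simp [hg0]
  have hp1 : g1 = F (p + d) := by simp [hg1]
  rw [hp0, hp1] at hfin
  exact hfin

end Aux

/-- Lemma 4.4 / `lem:feasible_solution`: in the Algorithm 1 setting, for a
nonnegative continuously differentiable DR-submodular `F` with gradient `G`, and `q* ∈ Q`,
`p* ∈ P` with `q* + p* ≤ 1`, for every `1 ≤ i ≤ 1/ε`:
`⟪p* ⊙ (1 − z⁽ⁱ⁻¹⁾), ∇F(z⁽ⁱ⁻¹⁾)⟫ ≥ (1−ε)^{i−1}·F(p*) − F(z⁽ⁱ⁻¹⁾)` and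
`q* + p* ⊙ (1 − y⁽ⁱ⁻¹⁾) ≤ 1`. -/
theorem stmt_4 {n : ℕ} (Q P : Set (Vec n)) (ε : ℝ) (N : ℕ) (y z a b : ℕ → Vec n)
    (H : Alg1Setting Q P ε N y z a b)
    (F : Vec n → ℝ) (G : Vec n → Vec n)
    (hF0 : ∀ x, inBox x → 0 ≤ F x)
    (hDR : DRSubmodular F)
    (hGrad : ∀ x, inBox x → HasGradientAt F (G x) x)
    (hGcont : ContinuousOn G {x : Vec n | inBox x})
    (q p : Vec n) (hq : q ∈ Q) (hp : p ∈ P) (hqp : ∀ j, q j + p j ≤ 1) :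
    ∀ i, 1 ≤ i → i ≤ N →
      ((1 - ε)^(i-1) * F p - F (z (i-1)) ≤
        ⟪had p (oneM (z (i-1))), G (z (i-1))⟫_ℝ) ∧
      (∀ j, q j + p j * (1 - y (i-1) j) ≤ 1) := by
  obtain ⟨hQbox, hQconv, hPbox, hPconv, hPdown, hε0, hε1, hεN, hy0Q, hy0min, hz0,
    haQ, hbP, hfeas, hyrec, hzrec⟩ := H
  have hzfact : ∀ i, i ≤ N → inBox (z i) ∧ ∀ j, z i j ≤ 1 - (1-ε)^i := by
    intro i
    induction i with
    | zero =>
      intro _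
      rw [hz0]
      constructor
      · intro j; norm_num
      · intro j; norm_num
    | succ i ih =>
      intro hiN
      obtain ⟨hbox, hbd⟩ := ih (by omega)
      have hrec := hzrec (i+1) (by omega) hiN
      simp only [Nat.add_sub_cancel] at hrec
      have hb := hPbox _ (hbP (i+1) (by omega) hiN)
      constructor
      · intro j
        obtain ⟨h1, h2⟩ := hbox j
        obtain ⟨h3, h4⟩ := hb j
        rw [hrec]
        simp only [vec_add_apply, vec_smul_apply, had, oneM, PiLp.toLp_apply]
        constructor
        · nlinarith [mul_nonneg hε0.le (mul_nonneg (by linarith : (0:ℝ) ≤ 1 - z i j) h3)]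
        · nlinarith [mul_nonneg (by linarith : (0:ℝ) ≤ 1 - z i j)
            (by nlinarith : (0:ℝ) ≤ 1 - ε * b (i+1) j)]
      · intro j
        obtain ⟨h1, h2⟩ := hbox j
        obtain ⟨h3, h4⟩ := hb j
        have h5 := hbd j
        rw [hrec]
        simp only [vec_add_apply, vec_smul_apply, had, oneM, PiLp.toLp_apply, pow_succ]
        nlinarith [mul_nonneg (by linarith : (0:ℝ) ≤ 1 - z i j)
            (mul_nonneg hε0.le (by linarith : (0:ℝ) ≤ 1 - b (i+1) j)),
          mul_nonneg (by linarith : (0:ℝ) ≤ 1 - z i j - (1-ε)^i)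
            (by linarith : (0:ℝ) ≤ 1 - ε)]
  have hyfact : ∀ i, i ≤ N → inBox (y i) := by
    intro i
    induction i with
    | zero => intro _; exact hQbox _ hy0Q
    | succ i ih =>
      intro hiN
      have hbox := ih (by omega)
      have hrec := hyrec (i+1) (by omega) hiN
      simp only [Nat.add_sub_cancel] at hrec
      have ha := hQbox _ (haQ (i+1) (by omega) hiN)
      intro j
      obtain ⟨h1, h2⟩ := hbox j
      obtain ⟨h3, h4⟩ := ha j
      rw [hrec]
      simp only [vec_add_apply, vec_smul_apply]
      constructor
      · nlinarith
      · nlinarith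
  intro i hi1 hiN
  obtain ⟨hZbox, hZbd⟩ := hzfact (i-1) (by omega)
  have hYbox := hyfact (i-1) (by omega)
  have hpbox := hPbox p hp
  have hqbox := hQbox q hq
  constructor
  · set Z := z (i-1) with hZ
    set w : Vec n := p + had Z (oneM p) with hw
    have hm0 : (0:ℝ) ≤ 1 - (1-ε)^(i-1) := by
      have : (1-ε)^(i-1) ≤ 1 := pow_le_one₀ (by linarith) (by linarith)
      linarith
    have hm1 : 1 - (1-ε)^(i-1) < 1 := by
      have : 0 < (1-ε)^(i-1) := pow_pos (by linarith) _
      linarith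
    have hlb := scale_lb hDR hGrad hF0 p Z hpbox hZbox (1 - (1-ε)^(i-1)) hm0 hm1 hZbd
    rw [← hw] at hlb
    have hwbox : inBox w := by
      intro j
      simp only [hw, vec_add_apply, had, oneM, PiLp.toLp_apply]
      constructor
      · nlinarith [(hpbox j).1, (hZbox j).1, (hpbox j).2]
      · nlinarith [(hpbox j).2, (hZbox j).2, (hZbox j).1]
    have hZw : ∀ j, Z j ≤ w j := by
      intro j
      simp only [hw, vec_add_apply, had, oneM, PiLp.toLp_apply]
      nlinarith [(hpbox j).1, (hZbox j).2]
    have hub := grad_ub hDR hGrad Z w hZbox hwbox hZw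
    have hsub : w - Z = had p (oneM Z) := by
      ext j
      simp only [hw, vec_sub_apply, vec_add_apply, had, oneM, PiLp.toLp_apply]
      ring
    rw [hsub] at hub
    have hlb' : (1-ε)^(i-1) * F p ≤ F w := by
      have : (1 - (1 - (1-ε)^(i-1))) = (1-ε)^(i-1) := by ring
      rwa [this] at hlb
    linarith
  · intro j
    obtain ⟨h1, h2⟩ := hqbox j
    obtain ⟨h3, h4⟩ := hpbox j
    obtain ⟨h5, h6⟩ := hYbox j
    nlinarith [hqp j]
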